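/- For the function k(z) = z^p(1+Bδz)^{(A-B)(p-β)/B} with B ≠ 0, |δ| = 1, the n-th Taylor coefficient (n ≥ p+1) has modulus exactly ∏_{j=1}^{n-p} |A(p-β) - B(p-β+j-1)|/j, so when A(p-β) - B(n-β-1) > n-p-1 the bound |a_n| ≤ ∏_{j=1}^{n-p} (A(p-β) - B(p-β+j-1))/j is attained. -/

import Mathlib

open Metric Complex Filter ENNReal Topology

set_option maxHeartbeats 1000000

theorem stmt_17 (p : ℕ) (hp : 1 ≤ p) (A B β : ℝ)
    (hB : -1 ≤ B) (hBA : B < A) (hA : A ≤ 1) (hβ0 : 0 ≤ β) (hβ1 : β < 1)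
    (hB0 : B ≠ 0) (δ : ℂ) (hδ : ‖δ‖ = 1) (k : ℂ → ℂ)
    (hk : ∀ z : ℂ, k z = z ^ p * (1 + (B : ℂ) * δ * z) ^ ((((A - B) * ((p : ℝ) - β) / B : ℝ)) : ℂ))
    (a : ℕ → ℂ) (ha : ∀ z ∈ ball (0:ℂ) 1, k z = ∑' m : ℕ, a m * z ^ m) :
    (∀ n : ℕ, p + 1 ≤ n →
      ‖a n‖ = ∏ j ∈ Finset.Icc 1 (n - p),
        |A * ((p : ℝ) - β) - B * ((p : ℝ) - β + (j : ℝ) - 1)| / (j : ℝ)) ∧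
    (∀ n : ℕ, p + 1 ≤ n →
      A * ((p : ℝ) - β) - B * ((n : ℝ) - β - 1) > (n : ℝ) - (p : ℝ) - 1 →
      ‖a n‖ = ∏ j ∈ Finset.Icc 1 (n - p),
        (A * ((p : ℝ) - β) - B * ((p : ℝ) - β + (j : ℝ) - 1)) / (j : ℝ)) := by
  set u : ℂ := (B : ℂ) * δ with hu_def
  set c : ℝ := (A - B) * ((p : ℝ) - β) / B with hc_def
  set cc : ℂ := ((c : ℝ) : ℂ) with hcc_def
  set g : ℂ → ℂ := fun z => (1 + u * z) ^ cc with hg_def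
  have hB1 : |B| ≤ 1 := abs_le.mpr ⟨hB, (hBA.le.trans hA)⟩
  have hnu : ‖u‖ = |B| := by
    rw [hu_def, norm_mul, hδ, mul_one, Complex.norm_real, Real.norm_eq_abs]
  have hk' : ∀ z : ℂ, k z = z ^ p * g z := hk
  have hslit : ∀ z ∈ ball (0:ℂ) 1, 1 + u * z ∈ slitPlane := by
    intro z hz
    rw [mem_ball_zero_iff] at hz
    apply mem_slitPlane_of_norm_lt_one
    rw [norm_mul, hnu]
    nlinarith [norm_nonneg z, abs_nonneg B]
  have hg0 : g 0 = 1 := by simp [hg_def]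
  have hgne : ∀ z ∈ ball (0:ℂ) 1, g z ≠ 0 := by
    intro z hz
    simp only [hg_def]
    rw [Ne, Complex.cpow_eq_zero_iff]
    rintro ⟨h1, -⟩
    exact slitPlane_ne_zero (hslit z hz) h1
  have hkne : ∀ z ∈ ball (0:ℂ) 1, z ≠ 0 → k z ≠ 0 := by
    intro z hz hz0
    rw [hk' z]
    exact mul_ne_zero (pow_ne_zero _ hz0) (hgne z hz)
  -- summability of the shifted coefficient series
  have hsum : ∀ (m : ℕ), ∀ z ∈ ball (0:ℂ) 1, Summable (fun i => a (i + m) * z ^ i) := by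
    intro m z hz
    rcases eq_or_ne z 0 with rfl | hz0
    · apply summable_of_ne_finset_zero (s := {0})
      intro i hi
      simp only [Finset.mem_singleton] at hi
      simp [zero_pow hi]
    · have h0 : Summable (fun i => a i * z ^ i) := by
        by_contra h
        have h2 := ha z hz
        rw [tsum_eq_zero_of_not_summable h] at h2
        exact hkne z hz hz0 h2
      have h1 : Summable (fun i => a (i + m) * z ^ (i + m)) := (summable_nat_add_iff m).2 h0
      refine (h1.mul_right ((z ^ m)⁻¹)).congr fun i => ?_
      rw [pow_add]
      field_simp
  -- radius bounds
  have hrad : ∀ m : ℕ, 1 ≤ (FormalMultilinearSeries.ofScalars ℂ (fun i => a (i + m))).radius := by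
    intro m
    apply ENNReal.le_of_forall_nnreal_lt
    intro r hr
    have hr1 : (r : ℝ) < 1 := by exact_mod_cast hr
    apply FormalMultilinearSeries.le_radius_of_tendsto (l := 0)
    have hz : ((r : ℝ) : ℂ) ∈ ball (0:ℂ) 1 := by
      rw [mem_ball_zero_iff, Complex.norm_real, Real.norm_eq_abs, NNReal.abs_eq r]
      exact hr1
    have hs := (hsum m _ hz).tendsto_atTop_zero
    have hnorm := tendsto_zero_iff_norm_tendsto_zero.mp hs
    refine hnorm.congr fun n => ?_
    rw [norm_mul, norm_pow, FormalMultilinearSeries.ofScalars_norm,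
      Complex.norm_real, Real.norm_eq_abs, NNReal.abs_eq r]
  -- the shifted sum functions have power series on the unit ball (as formal sums)
  have hHS : ∀ m : ℕ, HasFPowerSeriesOnBall (fun z : ℂ => ∑' i, a (i + m) * z ^ i)
      (FormalMultilinearSeries.ofScalars ℂ (fun i => a (i + m))) 0 1 := by
    intro m
    have h0 : (0 : ℝ≥0∞) < (FormalMultilinearSeries.ofScalars ℂ (fun i => a (i + m))).radius :=
      lt_of_lt_of_le one_pos (hrad m)
    have hball := (FormalMultilinearSeries.ofScalars ℂ (fun i => a (i + m))).hasFPowerSeriesOnBall h0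
    have hmono := hball.mono one_pos (hrad m)
    have hfun : (FormalMultilinearSeries.ofScalars ℂ (fun i => a (i + m))).sum =
        (fun z : ℂ => ∑' i, a (i + m) * z ^ i) := by
      funext z
      show (∑' n, (FormalMultilinearSeries.ofScalars ℂ fun i => a (i + m)) n fun _ => z) = _
      refine tsum_congr fun n => ?_
      rw [FormalMultilinearSeries.ofScalars_apply_eq, smul_eq_mul]
    rwa [hfun] at hmono
  have hcont : ∀ m : ℕ, ContinuousAt (fun z : ℂ => ∑' i, a (i + m) * z ^ i) 0 :=
    fun m => (hHS m).hasFPowerSeriesAt.continuousAt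
  have hF0 : ∀ m : ℕ, (∑' i, a (i + m) * (0:ℂ) ^ i) = a m := by
    intro m
    rw [tsum_eq_single 0]
    · simp
    · intro i hi
      simp [zero_pow hi]
  have hgc : ContinuousAt g 0 := by
    apply ContinuousAt.cpow
    · exact (continuous_const.add (continuous_const.mul continuous_id)).continuousAt
    · exact continuousAt_const
    · simpa using Complex.one_mem_slitPlane
  -- limit lemma
  have LIM : ∀ m q : ℕ, (∀ z ∈ ball (0:ℂ) 1, z ≠ 0 → (∑' i, a (i + m) * z ^ i) = z ^ q * g z) →
      a m = 0 ^ q * g 0 := by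
    intro m q h
    set zk : ℕ → ℂ := fun n => ((1 / ((n : ℝ) + 2) : ℝ) : ℂ) with hzk_def
    have hk0 : Tendsto zk atTop (𝓝 0) := by
      have h1 : Tendsto (fun n : ℕ => (1 / ((n : ℝ) + 2) : ℝ)) atTop (𝓝 0) := by
        have := (tendsto_one_div_add_atTop_nhds_zero_nat (𝕜 := ℝ)).comp (tendsto_add_atTop_nat 1)
        refine this.congr fun n => ?_
        simp [Function.comp]
        ring_nf
      have h2 := (Complex.continuous_ofReal.tendsto 0).comp h1
      rw [Complex.ofReal_zero] at h2
      rw [hzk_def]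
      exact h2
    have hmem : ∀ n : ℕ, zk n ∈ ball (0:ℂ) 1 := by
      intro n
      rw [mem_ball_zero_iff, hzk_def, Complex.norm_real, Real.norm_eq_abs]
      rw [_root_.abs_of_pos (by positivity)]
      rw [div_lt_one (by positivity)]
      linarith [Nat.cast_nonneg (α := ℝ) n]
    have hne : ∀ n : ℕ, zk n ≠ 0 := by
      intro n
      simp only [hzk_def, Ne, Complex.ofReal_eq_zero]
      positivity
    have t1 : Tendsto (fun n => ∑' i, a (i + m) * (zk n) ^ i) atTop (𝓝 (a m)) := by
      have := (hcont m).tendsto.comp hk0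
      simpa [hF0 m, Function.comp_def] using this
    have t1' : Tendsto (fun n => (zk n) ^ q * g (zk n)) atTop (𝓝 (a m)) :=
      t1.congr fun n => h (zk n) (hmem n) (hne n)
    have t2 : Tendsto (fun n => (zk n) ^ q * g (zk n)) atTop (𝓝 ((0:ℂ) ^ q * g 0)) := by
      have hc2 : ContinuousAt (fun z : ℂ => z ^ q * g z) 0 :=
        (continuousAt_pow (0:ℂ) q).mul hgc
      simpa [Function.comp_def] using hc2.tendsto.comp hk0
    exact tendsto_nhds_unique t1' t2
  -- key induction: stripping the z^p factor
  have KEY : ∀ m : ℕ, m ≤ p → ∀ z ∈ ball (0:ℂ) 1, z ≠ 0 →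
      (∑' i, a (i + m) * z ^ i) = z ^ (p - m) * g z := by
    intro m
    induction m with
    | zero =>
      intro _ z hz _
      have h1 := ha z hz
      rw [hk' z] at h1
      simpa using h1.symm
    | succ m ih =>
      intro hmp z hz hz0
      have hm : m ≤ p := Nat.le_of_succ_le hmp
      have hih := ih hm
      have ham : a m = 0 := by
        have h2 := LIM m (p - m) hih
        rw [zero_pow (by omega : p - m ≠ 0), zero_mul] at h2
        exact h2
      have hsplit := Summable.tsum_eq_zero_add (hsum m z hz)
      rw [hih z hz hz0] at hsplit
      have e1 : (fun i => a ((i + 1) + m) * z ^ (i + 1)) =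
          fun i => (a (i + (m + 1)) * z ^ i) * z := by
        funext i
        have hidx : i + 1 + m = i + (m + 1) := by omega
        rw [hidx, pow_succ]
        ring
      rw [e1, tsum_mul_right] at hsplit
      have hpow : z ^ (p - m) = z ^ (p - (m + 1)) * z := by
        rw [← pow_succ]
        congr 1
        omega
      simp only [zero_add, pow_zero, mul_one] at hsplit
      rw [ham, hpow] at hsplit
      apply mul_right_cancel₀ hz0
      linear_combination -hsplit
  have hfinal : ∀ z ∈ ball (0:ℂ) 1, z ≠ 0 → (∑' i, a (i + p) * z ^ i) = g z := by
    intro z hz hz0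
    have := KEY p le_rfl z hz hz0
    simpa using this
  have hap : a p = 1 := by
    have h := LIM p 0 (fun z hz hz0 => by simpa using hfinal z hz hz0)
    simpa [hg0] using h
  -- power series for g with coefficients a (· + p)
  have hQ : HasFPowerSeriesOnBall g
      (FormalMultilinearSeries.ofScalars ℂ (fun i => a (i + p))) 0 1 := by
    refine ⟨hrad p, one_pos, ?_⟩
    intro y hy
    have hy' : ‖y‖ < 1 := by
      rw [EMetric.mem_ball, edist_zero_right] at hy
      rw [enorm_eq_nnnorm] at hy
      exact_mod_cast hy
    have hyb : y ∈ ball (0:ℂ) 1 := mem_ball_zero_iff.mpr hy'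
    have hmain : HasSum (fun n => a (n + p) * y ^ n) (g (0 + y)) := by
      rw [zero_add]
      rcases eq_or_ne y 0 with rfl | hy0
      · have h := hasSum_single (f := fun n => a (n + p) * (0:ℂ) ^ n) 0
          (fun b hb => by simp [zero_pow hb])
        simpa [hap, hg0] using h
      · exact ((hsum p y hyb).hasSum_iff).mpr (hfinal y hyb hy0)
    refine hmain.congr_fun fun n => ?_
    rw [FormalMultilinearSeries.ofScalars_apply_eq, smul_eq_mul]
  have hcoeff : ∀ m : ℕ, (Nat.factorial m : ℂ) * a (m + p) = iteratedDeriv m g 0 := by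
    intro m
    have h := hQ.factorial_smul (1 : ℂ) m
    rw [iteratedDeriv_eq_iteratedFDeriv, ← h, FormalMultilinearSeries.ofScalars_apply_eq]
    simp [smul_eq_mul]
  -- iterated derivatives of g
  have hder : ∀ m : ℕ, ∀ z ∈ ball (0:ℂ) 1, iteratedDeriv m g z =
      (∏ i ∈ Finset.range m, (cc - (i : ℂ))) * u ^ m * (1 + u * z) ^ (cc - (m : ℂ)) := by
    intro m
    induction m with
    | zero =>
      intro z hz
      simp [hg_def]
    | succ m ih =>
      intro z hz
      rw [iteratedDeriv_succ]
      have hev : iteratedDeriv m g =ᶠ[nhds z]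
          fun w => (∏ i ∈ Finset.range m, (cc - (i : ℂ))) * u ^ m * (1 + u * w) ^ (cc - (m : ℂ)) := by
        filter_upwards [isOpen_ball.mem_nhds hz] with w hw using ih w hw
      rw [hev.deriv_eq]
      have hbase : HasDerivAt (fun w : ℂ => 1 + u * w) (u * 1) z :=
        ((hasDerivAt_id z).const_mul u).const_add 1
      have hd : HasDerivAt (fun w : ℂ => (1 + u * w) ^ (cc - (m : ℂ)))
          ((cc - (m : ℂ)) * (1 + u * z) ^ (cc - (m : ℂ) - 1) * (u * 1)) z :=
        hbase.cpow_const (hslit z hz)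
      rw [(hd.const_mul ((∏ i ∈ Finset.range m, (cc - (i : ℂ))) * u ^ m)).deriv]
      rw [Finset.prod_range_succ]
      have hexp : (1 + u * z) ^ (cc - (m : ℂ) - 1) = (1 + u * z) ^ (cc - ((m + 1 : ℕ) : ℂ)) := by
        congr 1
        push_cast
        ring
      rw [hexp]
      ring
  have hID : ∀ m : ℕ, iteratedDeriv m g 0 = (∏ i ∈ Finset.range m, (cc - (i : ℂ))) * u ^ m := by
    intro m
    have h := hder m 0 (mem_ball_self one_pos)
    simpa using h
  have hfac : ∀ m : ℕ, ((Nat.factorial m : ℕ) : ℂ) ≠ 0 := fun m =>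
    Nat.cast_ne_zero.mpr m.factorial_ne_zero
  have ha' : ∀ m : ℕ, a (m + p) = (∏ i ∈ Finset.range m, (cc - (i : ℂ))) * u ^ m / (Nat.factorial m : ℂ) := by
    intro m
    rw [eq_div_iff (hfac m)]
    have h := hcoeff m
    rw [hID m] at h
    linear_combination h
  -- norm computation (part 1)
  have part1 : ∀ n : ℕ, p + 1 ≤ n →
      ‖a n‖ = ∏ j ∈ Finset.Icc 1 (n - p),
        |A * ((p : ℝ) - β) - B * ((p : ℝ) - β + (j : ℝ) - 1)| / (j : ℝ) := by
    intro n hn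
    obtain ⟨m, rfl⟩ : ∃ m, n = m + p := ⟨n - p, by omega⟩
    have hnp : (m + p) - p = m := by omega
    rw [ha' m, hnp]
    rw [norm_div, norm_mul, norm_prod, norm_pow, hnu, Complex.norm_natCast]
    have hprodn : ∀ i : ℕ, ‖cc - (i : ℂ)‖ = |c - (i : ℝ)| := by
      intro i
      rw [hcc_def]
      rw [show ((c : ℝ) : ℂ) - (i : ℂ) = (((c - (i : ℝ)) : ℝ) : ℂ) by push_cast; ring]
      rw [Complex.norm_real, Real.norm_eq_abs]
    rw [← Finset.Ico_add_one_right_eq_Icc, Finset.prod_Ico_eq_prod_range]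
    have hrange : m + 1 - 1 = m := by omega
    rw [hrange]
    have heach : ∀ i ∈ Finset.range m,
        |A * ((p : ℝ) - β) - B * ((p : ℝ) - β + ((1 + i : ℕ) : ℝ) - 1)| / ((1 + i : ℕ) : ℝ)
          = (|B| * |c - (i : ℝ)|) / ((i : ℝ) + 1) := by
      intro i _
      have harg : A * ((p : ℝ) - β) - B * ((p : ℝ) - β + ((1 + i : ℕ) : ℝ) - 1)
          = B * (c - (i : ℝ)) := by
        rw [hc_def]
        push_cast
        field_simp
        ring
      rw [harg, abs_mul]
      congr 1
      push_cast
      ring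
    rw [Finset.prod_congr rfl heach]
    rw [Finset.prod_div_distrib, Finset.prod_mul_distrib, Finset.prod_const]
    have hfactR : (∏ i ∈ Finset.range m, ((i : ℝ) + 1)) = (Nat.factorial m : ℝ) := by
      rw [← Finset.prod_range_add_one_eq_factorial m]
      push_cast
      rfl
    rw [hfactR]
    rw [Finset.prod_congr rfl (fun i _ => hprodn i)]
    rw [Finset.card_range]
    ring
  refine ⟨part1, ?_⟩
  intro n hn hpos
  rw [part1 n hn]
  apply Finset.prod_congr rfl
  intro j hj
  rw [Finset.mem_Icc] at hj
  have hj1 : (1 : ℝ) ≤ (j : ℝ) := by exact_mod_cast hj.1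
  have hjm : (j : ℝ) ≤ (n : ℝ) - (p : ℝ) := by
    have h1 : (j : ℝ) ≤ ((n - p : ℕ) : ℝ) := by exact_mod_cast hj.2
    have h2 : ((n - p : ℕ) : ℝ) = (n : ℝ) - (p : ℝ) := by
      have : p ≤ n := by omega
      push_cast [this]
      ring
    linarith [h1, h2.le, h2.ge]
  have hx : 0 ≤ A * ((p : ℝ) - β) - B * ((p : ℝ) - β + (j : ℝ) - 1) := by
    nlinarith [mul_nonneg (by linarith : (0:ℝ) ≤ 1 + B)
      (by linarith : (0:ℝ) ≤ ((n : ℝ) - (p : ℝ)) - (j : ℝ))]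
  rw [_root_.abs_of_nonneg hx]
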